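/- Let L and L′ be complex Lie algebras admitting bases e₁,…,e₅ and f₁,…,f₅ respectively, whose only nonzero brackets among basis vectors (up to antisymmetry) are: in L: [e₂,e₄]=e₁, [e₃,e₄]=e₂, [e₂,e₅]=e₁, [e₃,e₅]=e₂; in L′: [f₃,f₅]=f₂, [f₄,f₅]=f₃. Then L and L′ are isomorphic as Lie algebras over ℂ. -/

import Mathlib

/-- `Realizes L c` means that the complex Lie algebra `L` admits a basis `e₁, …, e₅`
(indexed by `Fin 5`) in which the brackets of basis vectors are given by the
structure constants `c`, i.e. `⁅eᵢ, eⱼ⁆ = ∑ₖ c i j k • eₖ` for all `i < j`,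
all brackets of basis vectors being determined by these via antisymmetry. -/
def Realizes (L : Type) [LieRing L] [LieAlgebra ℂ L]
    (c : Fin 5 → Fin 5 → Fin 5 → ℂ) : Prop :=
  ∃ e : Module.Basis (Fin 5) ℂ L, ∀ i j : Fin 5, i < j →
    ⁅e i, e j⁆ = ∑ k, c i j k • e k

/-- The nilpotent pattern `d₆(0:0)`: `[e₂,e₄]=e₁`, `[e₃,e₄]=e₂`, `[e₂,e₅]=e₁`, `[e₃,e₅]=e₂`. -/
def patternL : Fin 5 → Fin 5 → Fin 5 → ℂ := fun i j =>
  if i = 1 ∧ j = 3 then ![1, 0, 0, 0, 0]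
  else if i = 2 ∧ j = 3 then ![0, 1, 0, 0, 0]
  else if i = 1 ∧ j = 4 then ![1, 0, 0, 0, 0]
  else if i = 2 ∧ j = 4 then ![0, 1, 0, 0, 0]
  else 0

/-- The nilpotent pattern `d₂₁(0:0:0)`: `[f₃,f₅]=f₂`, `[f₄,f₅]=f₃`. -/
def patternL' : Fin 5 → Fin 5 → Fin 5 → ℂ := fun i j =>
  if i = 2 ∧ j = 4 then ![0, 1, 0, 0, 0]
  else if i = 3 ∧ j = 4 then ![0, 0, 1, 0, 0]
  else 0

lemma my_lie_sum {L : Type} [LieRing L] (x : L) (s : Finset (Fin 5)) (g : Fin 5 → L) :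
    ⁅x, ∑ i ∈ s, g i⁆ = ∑ i ∈ s, ⁅x, g i⁆ := by
  induction s using Finset.cons_induction with
  | empty => simp
  | cons a s ha ih => simp [Finset.sum_insert ha, lie_add, ih]

lemma my_sum_lie {L : Type} [LieRing L] (x : L) (s : Finset (Fin 5)) (g : Fin 5 → L) :
    ⁅∑ i ∈ s, g i, x⁆ = ∑ i ∈ s, ⁅g i, x⁆ := by
  induction s using Finset.cons_induction with
  | empty => simp
  | cons a s ha ih => simp [Finset.sum_insert ha, add_lie, ih]

/-- The nilpotent algebras `d₆(0:0)` and `d₂₁(0:0:0)` are isomorphic. -/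
theorem d6_d21_generic_iso
    (L L' : Type) [LieRing L] [LieAlgebra ℂ L] [LieRing L'] [LieAlgebra ℂ L']
    (hL : Realizes L patternL) (hL' : Realizes L' patternL') :
    Nonempty (L ≃ₗ⁅ℂ⁆ L') := by
  obtain ⟨e, he⟩ := hL
  obtain ⟨f, hf⟩ := hL'
  -- bracket tables
  have e01 : ⁅e 0, e 1⁆ = 0 := by rw [he 0 1 (by decide)]; simp [patternL, Fin.sum_univ_five]
  have e02 : ⁅e 0, e 2⁆ = 0 := by rw [he 0 2 (by decide)]; simp [patternL, Fin.sum_univ_five]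
  have e03 : ⁅e 0, e 3⁆ = 0 := by rw [he 0 3 (by decide)]; simp [patternL, Fin.sum_univ_five]
  have e04 : ⁅e 0, e 4⁆ = 0 := by rw [he 0 4 (by decide)]; simp [patternL, Fin.sum_univ_five]
  have e12 : ⁅e 1, e 2⁆ = 0 := by rw [he 1 2 (by decide)]; simp [patternL, Fin.sum_univ_five]
  have e13 : ⁅e 1, e 3⁆ = e 0 := by rw [he 1 3 (by decide)]; simp [patternL, Fin.sum_univ_five]
  have e14 : ⁅e 1, e 4⁆ = e 0 := by rw [he 1 4 (by decide)]; simp [patternL, Fin.sum_univ_five]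
  have e23 : ⁅e 2, e 3⁆ = e 1 := by rw [he 2 3 (by decide)]; simp [patternL, Fin.sum_univ_five]
  have e24 : ⁅e 2, e 4⁆ = e 1 := by rw [he 2 4 (by decide)]; simp [patternL, Fin.sum_univ_five]
  have e34 : ⁅e 3, e 4⁆ = 0 := by rw [he 3 4 (by decide)]; simp [patternL, Fin.sum_univ_five]
  have f01 : ⁅f 0, f 1⁆ = 0 := by rw [hf 0 1 (by decide)]; simp [patternL', Fin.sum_univ_five]
  have f02 : ⁅f 0, f 2⁆ = 0 := by rw [hf 0 2 (by decide)]; simp [patternL', Fin.sum_univ_five]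
  have f03 : ⁅f 0, f 3⁆ = 0 := by rw [hf 0 3 (by decide)]; simp [patternL', Fin.sum_univ_five]
  have f04 : ⁅f 0, f 4⁆ = 0 := by rw [hf 0 4 (by decide)]; simp [patternL', Fin.sum_univ_five]
  have f12 : ⁅f 1, f 2⁆ = 0 := by rw [hf 1 2 (by decide)]; simp [patternL', Fin.sum_univ_five]
  have f13 : ⁅f 1, f 3⁆ = 0 := by rw [hf 1 3 (by decide)]; simp [patternL', Fin.sum_univ_five]
  have f14 : ⁅f 1, f 4⁆ = 0 := by rw [hf 1 4 (by decide)]; simp [patternL', Fin.sum_univ_five]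
  have f23 : ⁅f 2, f 3⁆ = 0 := by rw [hf 2 3 (by decide)]; simp [patternL', Fin.sum_univ_five]
  have f24 : ⁅f 2, f 4⁆ = f 1 := by rw [hf 2 4 (by decide)]; simp [patternL', Fin.sum_univ_five]
  have f34 : ⁅f 3, f 4⁆ = f 2 := by rw [hf 3 4 (by decide)]; simp [patternL', Fin.sum_univ_five]
  -- reversed f-brackets
  have f20 : ⁅f 2, f 0⁆ = 0 := by rw [← lie_skew, f02, neg_zero]
  have f30 : ⁅f 3, f 0⁆ = 0 := by rw [← lie_skew, f03, neg_zero]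
  have f40 : ⁅f 4, f 0⁆ = 0 := by rw [← lie_skew, f04, neg_zero]
  have f10 : ⁅f 1, f 0⁆ = 0 := by rw [← lie_skew, f01, neg_zero]
  -- the linear maps
  set v : Fin 5 → L' := ![f 1, f 2, f 3, f 4, f 0 + f 4] with hv
  set w : Fin 5 → L := ![e 4 - e 3, e 0, e 1, e 2, e 3] with hw
  set φ : L →ₗ[ℂ] L' := e.constr ℂ v with hφ
  set ψ : L' →ₗ[ℂ] L := f.constr ℂ w with hψ
  have φe : ∀ i : Fin 5, φ (e i) = v i := fun i => e.constr_basis ℂ v i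
  have ψf : ∀ i : Fin 5, ψ (f i) = w i := fun i => f.constr_basis ℂ w i
  have hψφ : ψ.comp φ = LinearMap.id := by
    apply e.ext; intro i
    fin_cases i <;>
      simp [φe, ψf, hv, hw, map_add, map_sub]
  have hφψ : φ.comp ψ = LinearMap.id := by
    apply f.ext; intro i
    fin_cases i <;>
      simp [φe, ψf, hv, hw, map_add, map_sub]
  -- bracket preservation on basis vectors
  have key : ∀ i j : Fin 5, i < j → φ ⁅e i, e j⁆ = ⁅φ (e i), φ (e j)⁆ := by
    intro i j hij
    fin_cases i <;> fin_cases j <;>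
      first
      | exact absurd hij (by decide)
      | simp [φe, hv, e01, e02, e03, e04, e12, e13, e14, e23, e24, e34,
          f01, f02, f03, f04, f12, f13, f14, f23, f24, f34, f10, f20, f30, f40,
          lie_add, add_lie]
  have key' : ∀ i j : Fin 5, φ ⁅e i, e j⁆ = ⁅φ (e i), φ (e j)⁆ := by
    intro i j
    rcases lt_trichotomy i j with h | h | h
    · exact key i j h
    · subst h; simp
    · rw [← lie_skew (e i) (e j), ← lie_skew (φ (e i)) (φ (e j)), map_neg, key j i h]
  -- bracket preservation in general
  have hbil : ∀ x y : L, φ ⁅x, y⁆ = ⁅φ x, φ y⁆ := by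
    intro x y
    have hx := e.sum_repr x
    have hy := e.sum_repr y
    calc φ ⁅x, y⁆ = φ ⁅∑ i, e.repr x i • e i, ∑ j, e.repr y j • e j⁆ := by rw [hx, hy]
      _ = ∑ j, ∑ i, e.repr y j • e.repr x i • φ ⁅e i, e j⁆ := by
          simp [my_sum_lie, my_lie_sum, smul_lie, lie_smul, Finset.smul_sum, map_sum, map_smul, -Module.Basis.sum_repr]
      _ = ∑ j, ∑ i, e.repr y j • e.repr x i • ⁅φ (e i), φ (e j)⁆ := by
          simp only [key']
      _ = ⁅φ (∑ i, e.repr x i • e i), φ (∑ j, e.repr y j • e j)⁆ := by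
          simp [my_sum_lie, my_lie_sum, smul_lie, lie_smul, Finset.smul_sum, map_sum, map_smul, -Module.Basis.sum_repr]
      _ = ⁅φ x, φ y⁆ := by rw [hx, hy]
  exact ⟨{ toFun := φ
           map_add' := φ.map_add
           map_smul' := φ.map_smul
           map_lie' := hbil _ _
           invFun := ψ
           left_inv := fun x => LinearMap.congr_fun hψφ x
           right_inv := fun x => LinearMap.congr_fun hφψ x }⟩
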